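/- Let p > 2 be a prime and let f be a quadratic polynomial over F_p (degree exactly 2). Then the image of f contains at least (p−5)/4 pairs of consecutive elements; that is, the number of x ∈ F_p such that x and x+1 both lie in the image f(F_p) and x+1 ≠ 0 is at least (p−5)/4 (as a real-number inequality). -/

import Mathlib

/-- The image of a quadratic polynomial over `F_p` contains at least `(p−5)/4` pairs of
consecutive elements: there are at least `(p−5)/4` elements `x` such that `x` and `x+1`
both lie in the image and `x + 1 ≠ 0`. -/
theorem image_quadratic_consecutive_pairs (p : ℕ) [Fact p.Prime] (hp : 2 < p)
    (f : Polynomial (ZMod p)) (hf : f.natDegree = 2) :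
    ((p : ℝ) - 5) / 4 ≤
      ({x : ZMod p | (∃ y, f.eval y = x) ∧ (∃ y, f.eval y = x + 1) ∧ x + 1 ≠ 0}.ncard : ℝ) := by
  classical
  set a := f.coeff 2 with ha_def
  set b := f.coeff 1 with hb_def
  set c := f.coeff 0 with hc_def
  have hfne : f ≠ 0 := by
    intro h; rw [h] at hf; simp at hf
  have ha : a ≠ 0 := by
    have := Polynomial.leadingCoeff_ne_zero.mpr hfne
    rwa [Polynomial.leadingCoeff, hf] at this
  have h2 : (2 : ZMod p) ≠ 0 := by
    have : ((2 : ℕ) : ZMod p) ≠ 0 := by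
      rw [Ne, ZMod.natCast_eq_zero_iff]
      intro h
      have := Nat.le_of_dvd (by norm_num) h
      omega
    simpa using this
  set β := b / (2 * a) with hβ
  set γ := c - b ^ 2 / (4 * a) with hγ
  have h4 : (4 : ZMod p) ≠ 0 := by
    have : (4 : ZMod p) = 2 * 2 := by norm_num
    rw [this]; exact mul_ne_zero h2 h2
  have hev : ∀ y, f.eval y = a * (y + β) ^ 2 + γ := by
    intro y
    rw [Polynomial.eval_eq_sum_range, hf]
    simp only [Finset.sum_range_succ, Finset.sum_range_zero, zero_add, pow_zero, mul_one,
      pow_one, ← ha_def, ← hb_def, ← hc_def]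
    rw [hβ, hγ]
    field_simp
    ring
  set X := {x : ZMod p | (∃ y, f.eval y = x) ∧ (∃ y, f.eval y = x + 1) ∧ x + 1 ≠ 0} with hX
  set W : Finset (ZMod p × ZMod p) :=
    Finset.univ.filter (fun z => a * z.2 ^ 2 - a * z.1 ^ 2 = 1) with hW
  have hWcard : W.card = p - 1 := by
    have : W.card = (Finset.univ.erase (0 : ZMod p)).card := by
      apply Finset.card_nbij' (fun z => z.2 - z.1)
        (fun w => ((1 / (a * w) - w) / 2, (1 / (a * w) + w) / 2))
      · intro z hz
        simp only [hW, Finset.mem_coe, Finset.mem_filter] at hz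
        have h1 := hz.2
        simp only [Finset.mem_coe, Finset.mem_erase, Finset.mem_univ, and_true]
        intro h
        have hz2 : z.2 = z.1 := by rwa [sub_eq_zero] at h
        rw [hz2] at h1
        simp at h1
      · intro w hw
        simp only [Finset.mem_coe, Finset.mem_erase, Finset.mem_univ, and_true] at hw
        simp only [hW, Finset.mem_coe, Finset.mem_filter, Finset.mem_univ, true_and]
        field_simp
        ring
      · intro z hz
        simp only [hW, Finset.mem_coe, Finset.mem_filter, Finset.mem_univ, true_and] at hz
        have hne : z.2 - z.1 ≠ 0 := by
          intro h
          have h' : z.2 = z.1 := by rwa [sub_eq_zero] at h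
          rw [h'] at hz; simp at hz
        have hsum : z.2 + z.1 = 1 / (a * (z.2 - z.1)) := by
          rw [eq_div_iff (mul_ne_zero ha hne)]
          linear_combination hz
        apply Prod.ext
        · show (1 / (a * (z.2 - z.1)) - (z.2 - z.1)) / 2 = z.1
          rw [div_eq_iff h2]
          linear_combination -hsum
        · show (1 / (a * (z.2 - z.1)) + (z.2 - z.1)) / 2 = z.2
          rw [div_eq_iff h2]
          linear_combination -hsum
      · intro w hw
        simp only [Finset.mem_coe, Finset.mem_erase, Finset.mem_univ, and_true] at hw
        show (1 / (a * w) + w) / 2 - (1 / (a * w) - w) / 2 = w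
        field_simp
        ring
    rw [this, Finset.card_erase_of_mem (Finset.mem_univ _), Finset.card_univ, ZMod.card]
  set S : Finset (ZMod p × ZMod p) := W.filter (fun z => a * z.2 ^ 2 + γ ≠ 0) with hS
  set Bad : Finset (ZMod p × ZMod p) := W.filter (fun z => a * z.2 ^ 2 + γ = 0) with hBad
  have hsplit : Bad.card + S.card = W.card := by
    have h := Finset.card_filter_add_card_filter_not
      (s := W) (p := fun z => a * z.2 ^ 2 + γ = 0)
    simpa [hS, hBad] using h
  have hbad4 : Bad.card ≤ 4 := by
    rcases Finset.eq_empty_or_nonempty Bad with h | ⟨z0, hz0⟩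
    · simp [h]
    · have hsub : Bad ⊆ ({z0.1, -z0.1} : Finset (ZMod p)) ×ˢ ({z0.2, -z0.2} : Finset (ZMod p)) := by
        intro z hz
        simp only [hBad, hW, Finset.mem_filter, Finset.mem_univ, true_and] at hz hz0
        obtain ⟨hzw, hzb⟩ := hz
        obtain ⟨hz0w, hz0b⟩ := hz0
        have hv : (z.2 - z0.2) * (z.2 + z0.2) = 0 := by
          have h' : a * ((z.2 - z0.2) * (z.2 + z0.2)) = 0 := by
            linear_combination hzb - hz0b
          exact (mul_eq_zero.mp h').resolve_left ha
        have hveq : z.2 ^ 2 = z0.2 ^ 2 := by linear_combination hv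
        have hu : (z.1 - z0.1) * (z.1 + z0.1) = 0 := by
          have h' : a * ((z.1 - z0.1) * (z.1 + z0.1)) = 0 := by
            linear_combination hz0w - hzw + a * hveq
          exact (mul_eq_zero.mp h').resolve_left ha
        simp only [Finset.mem_product, Finset.mem_insert, Finset.mem_singleton]
        constructor
        · rcases mul_eq_zero.mp hu with h | h
          · exact Or.inl (sub_eq_zero.mp h)
          · exact Or.inr (eq_neg_of_add_eq_zero_left h)
        · rcases mul_eq_zero.mp hv with h | h
          · exact Or.inl (sub_eq_zero.mp h)
          · exact Or.inr (eq_neg_of_add_eq_zero_left h)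
      calc Bad.card ≤ _ := Finset.card_le_card hsub
        _ ≤ 4 := by
          rw [Finset.card_product]
          have h1 : ({z0.1, -z0.1} : Finset (ZMod p)).card ≤ 2 :=
            (Finset.card_insert_le _ _).trans (by simp)
          have h2' : ({z0.2, -z0.2} : Finset (ZMod p)).card ≤ 2 :=
            (Finset.card_insert_le _ _).trans (by simp)
          calc _ ≤ 2 * 2 := Nat.mul_le_mul h1 h2'
            _ = 4 := rfl
  have hScard : p - 5 ≤ S.card := by omega
  set g : ZMod p × ZMod p → ZMod p := fun z => a * z.1 ^ 2 + γ with hg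
  have hginX : ∀ z ∈ S, g z ∈ X := by
    intro z hz
    simp only [hS, hW, Finset.mem_filter, Finset.mem_univ, true_and] at hz
    obtain ⟨hzw, hzb⟩ := hz
    have hx1 : g z + 1 = a * z.2 ^ 2 + γ := by
      show a * z.1 ^ 2 + γ + 1 = a * z.2 ^ 2 + γ
      linear_combination -hzw
    refine ⟨⟨z.1 - β, ?_⟩, ⟨z.2 - β, ?_⟩, ?_⟩
    · rw [hev]
      show a * (z.1 - β + β) ^ 2 + γ = a * z.1 ^ 2 + γ
      ring
    · rw [hev, hx1]
      ring
    · rw [hx1]; exact hzb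
  have hfiber : ∀ x ∈ S.image g, (S.filter (fun z => g z = x)).card ≤ 4 := by
    intro x hx
    obtain ⟨z0, hz0S, hz0e⟩ := Finset.mem_image.mp hx
    have hsub : S.filter (fun z => g z = x) ⊆
        ({z0.1, -z0.1} : Finset (ZMod p)) ×ˢ ({z0.2, -z0.2} : Finset (ZMod p)) := by
      intro z hz
      simp only [Finset.mem_filter] at hz
      obtain ⟨hzS, hze⟩ := hz
      simp only [hS, hW, Finset.mem_filter, Finset.mem_univ, true_and] at hzS hz0S
      have heq : a * z.1 ^ 2 + γ = a * z0.1 ^ 2 + γ := hze.trans hz0e.symm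
      have hu : (z.1 - z0.1) * (z.1 + z0.1) = 0 := by
        have h' : a * ((z.1 - z0.1) * (z.1 + z0.1)) = 0 := by
          linear_combination heq
        exact (mul_eq_zero.mp h').resolve_left ha
      have hv : (z.2 - z0.2) * (z.2 + z0.2) = 0 := by
        have h' : a * ((z.2 - z0.2) * (z.2 + z0.2)) = 0 := by
          linear_combination hzS.1 - hz0S.1 + heq
        exact (mul_eq_zero.mp h').resolve_left ha
      simp only [Finset.mem_product, Finset.mem_insert, Finset.mem_singleton]
      constructor
      · rcases mul_eq_zero.mp hu with h | h
        · exact Or.inl (sub_eq_zero.mp h)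
        · exact Or.inr (eq_neg_of_add_eq_zero_left h)
      · rcases mul_eq_zero.mp hv with h | h
        · exact Or.inl (sub_eq_zero.mp h)
        · exact Or.inr (eq_neg_of_add_eq_zero_left h)
    calc _ ≤ _ := Finset.card_le_card hsub
      _ ≤ 4 := by
        rw [Finset.card_product]
        have h1 : ({z0.1, -z0.1} : Finset (ZMod p)).card ≤ 2 :=
          (Finset.card_insert_le _ _).trans (by simp)
        have h2' : ({z0.2, -z0.2} : Finset (ZMod p)).card ≤ 2 :=
          (Finset.card_insert_le _ _).trans (by simp)
        calc _ ≤ 2 * 2 := Nat.mul_le_mul h1 h2'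
          _ = 4 := rfl
  have hSle : S.card ≤ 4 * (S.image g).card := Finset.card_le_mul_card_image S 4 hfiber
  have himX : (↑(S.image g) : Set (ZMod p)) ⊆ X := by
    intro x hx
    simp only [Finset.coe_image, Set.mem_image, Finset.mem_coe] at hx
    obtain ⟨z, hz, rfl⟩ := hx
    exact hginX z hz
  have hncard : (S.image g).card ≤ X.ncard := by
    rw [← Set.ncard_coe_finset]
    exact Set.ncard_le_ncard himX (Set.toFinite X)
  rw [div_le_iff₀ (by norm_num : (0:ℝ) < 4)]
  have c1 : ((p : ℝ) - 5) ≤ (S.card : ℝ) := by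
    have h' : ((p - 5 : ℕ) : ℝ) ≤ (S.card : ℝ) := by exact_mod_cast hScard
    rcases le_or_gt 5 p with h | h
    · push_cast [h] at h'; linarith
    · have hle : (p : ℝ) ≤ 5 := by exact_mod_cast h.le
      have hnn : (0:ℝ) ≤ (S.card : ℝ) := by exact Nat.cast_nonneg _
      linarith
  have c2 : (S.card : ℝ) ≤ 4 * ((S.image g).card : ℝ) := by exact_mod_cast hSle
  have c3 : ((S.image g).card : ℝ) ≤ (X.ncard : ℝ) := by exact_mod_cast hncard
  linarith
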